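/- Let (w_1,...,w_n) be a minimal lace diagram for (e_0,...,e_n). Then ell(s_k w_1) > ell(w_1) for all 1 <= k < e_0 and ell(w_n s_k) > ell(w_n) for all 1 <= k < e_n; equivalently, w_1^{-1}(k) < w_1^{-1}(k+1) for all 1 <= k < e_0 and w_n(k) < w_n(k+1) for all 1 <= k < e_n. -/

import Mathlib

open MvPolynomial

/-! Common setup.  Dots in columns, positions in permutations, and variable
indices are all 0-indexed: dot `q` (0-indexed) of column `i` is dot `q+1`
(1-indexed) in the paper, the variable `(i, j) : ℕ × ℕ` is the Chern root
`x^i_{j+1}`, and in the Schubert variable type `ℕ ⊕ ℕ`, `Sum.inl a` is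
`x_{a+1}` and `Sum.inr b` is `y_{b+1}`. -/

/-- Coxeter length = number of inversions of a (finitely supported) permutation of ℕ. -/
noncomputable def ell (w : Equiv.Perm ℕ) : ℕ :=
  {p : ℕ × ℕ | p.1 < p.2 ∧ w p.2 < w p.1}.ncard

/-- A finitely supported permutation of ℕ. -/
def FinSupp (w : Equiv.Perm ℕ) : Prop := {x | w x ≠ x}.Finite

/-- A lace diagram for the dimension vector `e 0, …, e n`, encoded as a sequence
`w 1, …, w n` of finitely supported permutations of ℕ (normalized so that
`w i = 1` outside `1 ≤ i ≤ n`): all descent positions of `w i` are `< e i` and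
all descent positions of `(w i)⁻¹` are `< e (i-1)` (0-indexed positions). -/
def IsLace (n : ℕ) (e : ℕ → ℕ) (w : ℕ → Equiv.Perm ℕ) : Prop :=
  (∀ i, i = 0 ∨ n < i → w i = 1) ∧
  ∀ i, 1 ≤ i → i ≤ n → FinSupp (w i) ∧
    (∀ k, w i (k + 1) < w i k → k < e i) ∧
    (∀ k, (w i)⁻¹ (k + 1) < (w i)⁻¹ k → k < e (i - 1))

/-- `chain w i k p = (w k)⁻¹ (⋯ ((w (i+1))⁻¹ p))` for `k ≥ i`, and `p` for `k ≤ i`. -/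
def chain (w : ℕ → Equiv.Perm ℕ) (i : ℕ) : ℕ → ℕ → ℕ
  | 0, p => p
  | k + 1, p => if k + 1 ≤ i then p else (w (k + 1))⁻¹ (chain w i k p)

/-- The rank conditions of a lace diagram: `rank e w i j` is the number of dots
`p < e i` of column `i` whose strand continues through column `j`. -/
noncomputable def rank (e : ℕ → ℕ) (w : ℕ → Equiv.Perm ℕ) (i j : ℕ) : ℕ :=
  {p : ℕ | p < e i ∧ ∀ k, i < k → k ≤ j → chain w i k p < e k}.ncard

/-- The lace diagram `w` has rank conditions `r` (for `0 ≤ i ≤ j ≤ n`). -/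
def RankEq (n : ℕ) (e : ℕ → ℕ) (w : ℕ → Equiv.Perm ℕ) (r : ℕ → ℕ → ℕ) : Prop :=
  ∀ i j, i ≤ j → j ≤ n → rank e w i j = r i j

/-- The length of a lace diagram. -/
noncomputable def diagLength (n : ℕ) (w : ℕ → Equiv.Perm ℕ) : ℕ :=
  ∑ i ∈ Finset.Icc 1 n, ell (w i)

/-- The expected codimension `d(r)`. -/
def codim (n : ℕ) (r : ℕ → ℕ → ℕ) : ℕ :=
  ∑ i ∈ Finset.range (n + 1), ∑ j ∈ Finset.range (n + 1),
    if i < j then (r i (j - 1) - r i j) * (r (i + 1) j - r i j) else 0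

/-- A minimal lace diagram: its length equals the expected codimension of its
rank conditions. -/
def IsMinimal (n : ℕ) (e : ℕ → ℕ) (w : ℕ → Equiv.Perm ℕ) : Prop :=
  IsLace n e w ∧ diagLength n w = codim n (rank e w)

/-- The longest element of `S m` (0-indexed), as a permutation of ℕ. -/
def longest (m : ℕ) : Equiv.Perm ℕ where
  toFun i := if i < m then m - 1 - i else i
  invFun i := if i < m then m - 1 - i else i
  left_inv i := by dsimp only; split_ifs <;> omega
  right_inv i := by dsimp only; split_ifs <;> omega

/-- Interchanging the x-variables `x (i+1)` and `x (i+2)` (0-indexed: `inl i`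
and `inl (i+1)`). -/
noncomputable def sX (i : ℕ) (f : MvPolynomial (ℕ ⊕ ℕ) ℤ) : MvPolynomial (ℕ ⊕ ℕ) ℤ :=
  rename (Sum.map (Equiv.swap i (i + 1)) id) f

/-- `S` is the family of double Schubert polynomials `S w = 𝔖_w(x; y)`:
it takes the prescribed product value on each longest element, it satisfies the
divided difference recursion `(x i - x (i+1)) * S (w * s i) = S w - (S w)^{s i}`
when `w` has a descent at `i` and `(S w)^{s i} = S w` otherwise, and only the
variables up to the last descents of `w` and `w⁻¹` occur in `S w`. -/
def IsSchubertFamily (S : Equiv.Perm ℕ → MvPolynomial (ℕ ⊕ ℕ) ℤ) : Prop :=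
  (∀ m : ℕ, S (longest m) =
      ∏ i ∈ Finset.range m, ∏ j ∈ Finset.range m,
        if i + j + 2 ≤ m then X (Sum.inl i) - X (Sum.inr j) else 1) ∧
  (∀ w : Equiv.Perm ℕ, FinSupp w → ∀ i : ℕ,
    (w (i + 1) < w i →
      (X (Sum.inl i) - X (Sum.inl (i + 1))) * S (w * Equiv.swap i (i + 1)) =
        S w - sX i (S w)) ∧
    (w i < w (i + 1) → sX i (S w) = S w)) ∧
  (∀ w : Equiv.Perm ℕ, FinSupp w → ∀ k l : ℕ,
    (∀ t, k ≤ t → ¬w (t + 1) < w t) → (∀ t, l ≤ t → ¬w⁻¹ (t + 1) < w⁻¹ t) →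
    ∀ v ∈ (S w).vars, (∃ a < k, v = Sum.inl a) ∨ (∃ b < l, v = Sum.inr b))

/-- The product `S(w) = 𝔖_{w 1}(x^1;x^0) ⋯ 𝔖_{w n}(x^n;x^{n-1})`, in the
variables `(i, j) = x^i_{j+1}`. -/
noncomputable def Sprod (n : ℕ) (S : Equiv.Perm ℕ → MvPolynomial (ℕ ⊕ ℕ) ℤ)
    (w : ℕ → Equiv.Perm ℕ) : MvPolynomial (ℕ × ℕ) ℤ :=
  ∏ i ∈ Finset.Icc 1 n,
    rename (Sum.elim (fun a => (i, a)) (fun b => (i - 1, b))) (S (w i))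

/-- The component-formula polynomial `Q_r`: the sum of `Sprod n S w` over all
minimal lace diagrams `w` with rank conditions `r`. -/
noncomputable def Qpoly (n : ℕ) (e : ℕ → ℕ) (r : ℕ → ℕ → ℕ)
    (S : Equiv.Perm ℕ → MvPolynomial (ℕ ⊕ ℕ) ℤ) : MvPolynomial (ℕ × ℕ) ℤ :=
  ∑ᶠ (w : ℕ → Equiv.Perm ℕ) (_ : IsMinimal n e w ∧ RankEq n e w r), Sprod n S w

/-- The shifted permutation `1^k × w`: fixes `0, …, k-1` (0-indexed) and sends
`k + j` to `k + w j`. -/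
def shiftPerm (k : ℕ) (w : Equiv.Perm ℕ) : Equiv.Perm ℕ where
  toFun j := if j < k then j else w (j - k) + k
  invFun j := if j < k then j else w⁻¹ (j - k) + k
  left_inv j := by
    dsimp only
    by_cases h : j < k
    · simp [h]
    · have h1 : ¬ w (j - k) + k < k := by omega
      simp only [if_neg h, if_neg h1, Nat.add_sub_cancel, Equiv.Perm.inv_def, Equiv.symm_apply_apply]
      omega
  right_inv j := by
    dsimp only
    by_cases h : j < k
    · simp [h]
    · have h1 : ¬ w⁻¹ (j - k) + k < k := by omega
      rw [Equiv.Perm.inv_def] at h1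
      simp only [if_neg h, if_neg h1, Nat.add_sub_cancel, Equiv.Perm.inv_def, Equiv.apply_symm_apply]
      omega

/-- The lace diagram `(1^k × w 1, …, 1^k × w n)`. -/
def shiftDiag (k : ℕ) (w : ℕ → Equiv.Perm ℕ) : ℕ → Equiv.Perm ℕ :=
  fun i => shiftPerm k (w i)

/-- The transformation of lace diagrams, allowed at `(i, j)` (0-indexed `j`,
so `j + 1 < e i`) when exactly one of the two descent conditions holds; it
replaces `w i` by `w i * s j` and `w (i+1)` by `s j * w (i+1)`. -/
def TransStep (n : ℕ) (e : ℕ → ℕ) (w w' : ℕ → Equiv.Perm ℕ) : Prop :=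
  IsLace n e w ∧ ∃ i j, 1 ≤ i ∧ i + 1 ≤ n ∧ j + 1 < e i ∧
    Xor' (w i (j + 1) < w i j) ((w (i + 1))⁻¹ (j + 1) < (w (i + 1))⁻¹ j) ∧
    w' = Function.update (Function.update w i (w i * Equiv.swap j (j + 1))) (i + 1)
          (Equiv.swap j (j + 1) * w (i + 1))

/-- The column where the strand through dot `q` of column `c` starts. -/
def startCol (e : ℕ → ℕ) (w : ℕ → Equiv.Perm ℕ) : ℕ → ℕ → ℕ
  | 0, _ => 0
  | c + 1, q => if w (c + 1) q < e c then startCol e w c (w (c + 1) q) else c + 1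

/-- The starting dot `(column, position)` of the strand through dot `q` of column `c`. -/
def startDot (e : ℕ → ℕ) (w : ℕ → Equiv.Perm ℕ) : ℕ → ℕ → ℕ × ℕ
  | 0, q => (0, q)
  | c + 1, q => if w (c + 1) q < e c then startDot e w c (w (c + 1) q) else (c + 1, q)

def endColAux (e : ℕ → ℕ) (w : ℕ → Equiv.Perm ℕ) : ℕ → ℕ → ℕ → ℕ
  | 0, c, _ => c
  | f + 1, c, q =>
      if (w (c + 1))⁻¹ q < e (c + 1) then endColAux e w f (c + 1) ((w (c + 1))⁻¹ q) else c

/-- The column where the strand through dot `q` of column `c` terminates. -/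
def endCol (n : ℕ) (e : ℕ → ℕ) (w : ℕ → Equiv.Perm ℕ) (c q : ℕ) : ℕ :=
  endColAux e w (n - c) c q

/-- `w` is the left-most lace diagram (for its rank conditions): it is a lace
diagram such that in every column the strands are sorted from top to bottom by
starting column (ascending) and then by terminating column (descending), exactly
as produced by the construction which adds, for `i = 0, …, n` and `j = n, …, i`,
all strands from column `i` to column `j` to the bottom of the diagram; and
strands with the same start and end do not cross. -/
def IsLeftmost (n : ℕ) (e : ℕ → ℕ) (w : ℕ → Equiv.Perm ℕ) : Prop :=
  IsLace n e w ∧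
  (∀ c, c ≤ n → ∀ q q', q < q' → q' < e c →
    startCol e w c q < startCol e w c q' ∨
      (startCol e w c q = startCol e w c q' ∧ endCol n e w c q' ≤ endCol n e w c q)) ∧
  (∀ c, 1 ≤ c → c ≤ n → ∀ q q', q < q' → q' < e c →
    startCol e w c q = startCol e w c q' → endCol n e w c q = endCol n e w c q' →
    w c q < w c q')

/-- The substitution homomorphism `φ_u` of a lace diagram `u`: it sends the
variable `x^i_j` to the variable `b_S` of the strand `S` of `u` through dot
`(i, j)`, where the strand variables are realized as the variables indexed by
the starting dots of strands. -/
noncomputable def phiMap (e : ℕ → ℕ) (u : ℕ → Equiv.Perm ℕ) :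
    MvPolynomial (ℕ × ℕ) ℤ →ₐ[ℤ] MvPolynomial (ℕ × ℕ) ℤ :=
  rename fun p => startDot e u p.1 p.2

/-- The product of the simple transpositions `s (i+1)` (1-indexed) for `i` in `l`. -/
def wordProd (l : List ℕ) : Equiv.Perm ℕ := (l.map fun i => Equiv.swap i (i + 1)).prod

/-- A reduced word for a finitely supported permutation of ℕ. -/
def IsReducedWord (u : Equiv.Perm ℕ) (l : List ℕ) : Prop :=
  wordProd l = u ∧ l.length = ell u

/-- Bruhat order: some reduced word for `u` contains a subword which is a
reduced word for `w`. -/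
def BruhatLE (w u : Equiv.Perm ℕ) : Prop :=
  ∃ l l', IsReducedWord u l ∧ IsReducedWord w l' ∧ l'.Sublist l

theorem Equiv.Perm.inv_apply_self {α : Type*} (f : Equiv.Perm α) (x : α) : f⁻¹ (f x) = x :=
  f.symm_apply_apply x

theorem Equiv.Perm.apply_inv_self {α : Type*} (f : Equiv.Perm α) (x : α) : f (f⁻¹ x) = x :=
  f.apply_symm_apply x

namespace QAux


open Equiv Finset

/-- inversion set -/
def InvS (v : Equiv.Perm ℕ) : Set (ℕ × ℕ) := {p : ℕ × ℕ | p.1 < p.2 ∧ v p.2 < v p.1}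

lemma ell_eq (v : Equiv.Perm ℕ) : ell v = (InvS v).ncard := rfl

lemma exists_bound (v : Equiv.Perm ℕ) (hv : FinSupp v) : ∃ M, ∀ x, M ≤ x → v x = x := by
  obtain ⟨b, hb⟩ := hv.bddAbove
  refine ⟨b + 1, fun x hx => ?_⟩
  by_contra h
  exact absurd (hb (Set.mem_setOf.mpr h)) (by omega)

lemma maps_lt (v : Equiv.Perm ℕ) (M : ℕ) (h : ∀ x, M ≤ x → v x = x) :
    ∀ x, x < M → v x < M := by
  intro x hx
  by_contra hc
  have h1 : v (v x) = v x := h _ (not_lt.mp hc)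
  have := v.injective h1
  omega

lemma inv_fix (v : Equiv.Perm ℕ) (M : ℕ) (h : ∀ x, M ≤ x → v x = x) :
    ∀ x, M ≤ x → v⁻¹ x = x := by
  intro x hx
  calc v⁻¹ x = v⁻¹ (v x) := by rw [h x hx]
  _ = x := v.inv_apply_self x

lemma invS_bdd (v : Equiv.Perm ℕ) (M : ℕ) (h : ∀ x, M ≤ x → v x = x) :
    ∀ p ∈ InvS v, p.1 < M ∧ p.2 < M := by
  rintro ⟨p, q⟩ ⟨h1, h2⟩
  simp only at h1 h2 ⊢
  have hq : q < M := by
    by_contra hq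
    push_neg at hq
    have hvq : v q = q := h q hq
    rcases lt_or_ge p M with hp | hp
    · have := maps_lt v M h p hp; omega
    · have := h p hp; omega
  exact ⟨by omega, hq⟩

lemma invS_finite (v : Equiv.Perm ℕ) (hv : FinSupp v) : (InvS v).Finite := by
  obtain ⟨M, hM⟩ := exists_bound v hv
  apply Set.Finite.subset ((Set.finite_Iio M).prod (Set.finite_Iio M))
  intro p hp
  obtain ⟨h1, h2⟩ := invS_bdd v M hM p hp
  exact ⟨h1, h2⟩

lemma finSupp_inv (v : Equiv.Perm ℕ) (hv : FinSupp v) : FinSupp v⁻¹ := by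
  have : {x | v⁻¹ x ≠ x} = {x | v x ≠ x} := by
    ext x
    simp only [Set.mem_setOf_eq]
    constructor
    · intro h h'
      have h2 := congrArg (⇑v⁻¹) h'
      rw [v.inv_apply_self] at h2
      exact h h2.symm
    · intro h h'
      have h2 := congrArg (⇑v) h'
      rw [v.apply_inv_self] at h2
      exact h h2.symm
  show {x | v⁻¹ x ≠ x}.Finite
  rw [this]; exact hv

lemma ell_inv (v : Equiv.Perm ℕ) : ell v⁻¹ = ell v := by
  rw [ell_eq, ell_eq]
  have himg : InvS v⁻¹ = (fun p : ℕ × ℕ => (v p.2, v p.1)) '' InvS v := by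
    ext ⟨a, b⟩
    constructor
    · rintro ⟨h1, h2⟩
      simp only at h1 h2
      refine ⟨(v⁻¹ b, v⁻¹ a), ⟨h2, ?_⟩, ?_⟩
      · simp only [Equiv.Perm.apply_inv_self]; exact h1
      · simp [Equiv.Perm.apply_inv_self]
    · rintro ⟨⟨p, q⟩, ⟨h1, h2⟩, heq⟩
      simp only [Prod.mk.injEq] at heq
      obtain ⟨rfl, rfl⟩ := heq
      exact ⟨h2, by simpa using h1⟩
  rw [himg, Set.ncard_image_of_injective]
  intro p q h
  simp only [Prod.mk.injEq] at h
  exact Prod.ext (v.injective h.2) (v.injective h.1)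

lemma swap_mono (k : ℕ) : ∀ p q : ℕ, p < q → (p, q) ≠ (k, k + 1) →
    Equiv.swap k (k + 1) p < Equiv.swap k (k + 1) q := by
  intro p q h hne
  rw [Equiv.swap_apply_def, Equiv.swap_apply_def]
  have : ¬(p = k ∧ q = k + 1) := by
    intro ⟨h1, h2⟩; exact hne (by rw [h1, h2])
  split_ifs <;> omega

lemma ell_mul_swap (v : Equiv.Perm ℕ) (hv : FinSupp v) (k : ℕ) (h : v k < v (k + 1)) :
    ell (v * Equiv.swap k (k + 1)) = ell v + 1 := by
  set s := Equiv.swap k (k + 1) with hs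
  have hsk : s k = k + 1 := Equiv.swap_apply_left k (k + 1)
  have hsk1 : s (k + 1) = k := Equiv.swap_apply_right k (k + 1)
  have hss : ∀ x, s (s x) = x := fun x => Equiv.swap_apply_self k (k + 1) x
  have key : InvS (v * s) = insert (k, k + 1) ((fun p : ℕ × ℕ => (s p.1, s p.2)) '' InvS v) := by
    ext ⟨p, q⟩
    constructor
    · rintro ⟨h1, h2⟩
      simp only [Equiv.Perm.mul_apply] at h1 h2
      by_cases hpq : (p, q) = (k, k + 1)
      · exact Or.inl hpq
      · refine Or.inr ⟨(s p, s q), ⟨swap_mono k p q h1 hpq, h2⟩, ?_⟩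
        simp [hss]
    · rintro (heq | ⟨⟨a, b⟩, hab, heq⟩)
      · rw [Prod.mk.injEq] at heq
        obtain ⟨rfl, rfl⟩ := heq
        refine ⟨by omega, ?_⟩
        simp only [Equiv.Perm.mul_apply, hsk, hsk1]
        exact h
      · obtain ⟨h1, h2⟩ := hab
        simp only at h1 h2
        simp only [Prod.mk.injEq] at heq
        obtain ⟨rfl, rfl⟩ := heq
        have hne : (a, b) ≠ (k, k + 1) := by
          rintro heq'
          rw [Prod.mk.injEq] at heq'
          obtain ⟨h3, h4⟩ := heq'
          subst h3; subst h4
          omega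
        refine ⟨swap_mono k a b h1 hne, ?_⟩
        simp only [Equiv.Perm.mul_apply, hss]
        exact h2
  rw [ell_eq, ell_eq, key]
  have hinj : Function.Injective (fun p : ℕ × ℕ => (s p.1, s p.2)) := by
    intro x y hxy
    simp only [Prod.mk.injEq] at hxy
    exact Prod.ext (s.injective hxy.1) (s.injective hxy.2)
  have hnotmem : (k, k + 1) ∉ (fun p : ℕ × ℕ => (s p.1, s p.2)) '' InvS v := by
    rintro ⟨⟨a, b⟩, ⟨h1, _⟩, heq⟩
    simp only [Prod.mk.injEq] at heq
    have ha : a = s k := by rw [← heq.1, hss]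
    have hb : b = s (k + 1) := by rw [← heq.2, hss]
    rw [hsk] at ha; rw [hsk1] at hb
    omega
  rw [Set.ncard_insert_of_notMem hnotmem ((invS_finite v hv).image _),
    Set.ncard_image_of_injective _ hinj]

lemma ell_swap_mul (v : Equiv.Perm ℕ) (hv : FinSupp v) (k : ℕ) (h : v⁻¹ k < v⁻¹ (k + 1)) :
    ell (Equiv.swap k (k + 1) * v) = ell v + 1 := by
  have h1 : ell (Equiv.swap k (k + 1) * v) = ell ((Equiv.swap k (k + 1) * v)⁻¹) :=
    (ell_inv _).symm
  rw [h1, mul_inv_rev, Equiv.swap_inv, ell_mul_swap v⁻¹ (finSupp_inv v hv) k h, ell_inv]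


def UU (w : ℕ → Equiv.Perm ℕ) : ℕ → Equiv.Perm ℕ
  | 0 => 1
  | k + 1 => UU w k * w (k + 1)
lemma UU_succ_apply (w : ℕ → Equiv.Perm ℕ) (k x : ℕ) :
    (UU w k)⁻¹ (UU w (k + 1) x) = w (k + 1) x := by
  show (UU w k)⁻¹ ((UU w k * w (k + 1)) x) = _
  simp [Equiv.Perm.mul_apply]

lemma UU_zero (w : ℕ → Equiv.Perm ℕ) : UU w 0 = 1 := rfl

lemma UU_one (w : ℕ → Equiv.Perm ℕ) : UU w 1 = w 1 := by
  show UU w 0 * w 1 = w 1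
  simp [UU_zero]

lemma chain_eq_UU (w : ℕ → Equiv.Perm ℕ) {i : ℕ} : ∀ {k : ℕ}, i ≤ k → ∀ p,
    chain w i k p = (UU w k)⁻¹ (UU w i p) := by
  intro k
  induction k with
  | zero =>
    intro h p
    obtain rfl : i = 0 := Nat.le_zero.mp h
    simp [chain, UU_zero]
  | succ k ih =>
    intro h p
    rcases Nat.lt_or_ge k i with hk | hk
    · obtain rfl : i = k + 1 := by omega
      simp [chain]
    · have hni : ¬(k + 1 ≤ i) := by omega
      have hch : chain w i (k + 1) p = (w (k + 1))⁻¹ (chain w i k p) := by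
        show (if k + 1 ≤ i then p else (w (k + 1))⁻¹ (chain w i k p)) = _
        rw [if_neg hni]
      rw [hch, ih hk p]
      show _ = ((UU w k * w (k + 1))⁻¹) (UU w i p)
      simp [mul_inv_rev, Equiv.Perm.mul_apply]

section Main

variable (N n : ℕ) (e : ℕ → ℕ) (w : ℕ → Equiv.Perm ℕ)

/-- wire positions finset -/
def Rset (i j : ℕ) : Finset ℕ :=
  (Finset.range N).filter fun q => ∀ k ∈ Finset.Icc i j, (UU w k)⁻¹ q < e k

def Af (i j : ℕ) : Finset ℕ := Rset N e w i (j - 1) \ Rset N e w i j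

def Bf (i j : ℕ) : Finset ℕ := Rset N e w (i + 1) j \ Rset N e w i j

def Xf (k : ℕ) : Finset (ℕ × ℕ) :=
  (Finset.range N ×ˢ Finset.range N).filter fun p =>
    (UU w k)⁻¹ p.1 < (UU w k)⁻¹ p.2 ∧ (UU w (k - 1))⁻¹ p.2 < (UU w (k - 1))⁻¹ p.1

def QF : Finset ((ℕ × ℕ) × ℕ × ℕ) :=
  ((Finset.range (n + 1) ×ˢ Finset.range (n + 1)) ×ˢ
      (Finset.range N ×ˢ Finset.range N)).filter fun x =>
    x.1.1 < x.1.2 ∧ x.2.1 ∈ Af N e w x.1.1 x.1.2 ∧ x.2.2 ∈ Bf N e w x.1.1 x.1.2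

def TF : Finset (ℕ × ℕ × ℕ) :=
  (Finset.Icc 1 n ×ˢ (Finset.range N ×ˢ Finset.range N)).filter fun x => x.2 ∈ Xf N w x.1

noncomputable def kk (x : (ℕ × ℕ) × ℕ × ℕ) : ℕ :=
  sInf {m | x.1.1 < m ∧ (UU w m)⁻¹ x.2.2 < (UU w m)⁻¹ x.2.1}

noncomputable def FF (x : (ℕ × ℕ) × ℕ × ℕ) : ℕ × ℕ × ℕ := (kk w x, x.2.2, x.2.1)

variable {N n e w}

lemma mem_Rset {i j q : ℕ} :
    q ∈ Rset N e w i j ↔ q < N ∧ ∀ k, i ≤ k → k ≤ j → (UU w k)⁻¹ q < e k := by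
  simp [Rset, Finset.mem_filter, Finset.mem_range, Finset.mem_Icc, and_imp]

variable (hM : ∀ k x, N ≤ x → w k x = x) (hE : ∀ k, k ≤ n → e k ≤ N)

include hM

lemma UU_fix : ∀ k x, N ≤ x → UU w k x = x := by
  intro k
  induction k with
  | zero => intro x _; rfl
  | succ k ih =>
    intro x hx
    show UU w k (w (k + 1) x) = x
    rw [hM (k + 1) x hx]
    exact ih x hx

lemma UU_inv_fix : ∀ k x, N ≤ x → (UU w k)⁻¹ x = x :=
  fun k => inv_fix (UU w k) N (UU_fix hM k)

lemma UU_lt : ∀ k x, x < N → UU w k x < N :=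
  fun k => maps_lt (UU w k) N (UU_fix hM k)

lemma UU_inv_lt : ∀ k x, x < N → (UU w k)⁻¹ x < N :=
  fun k => maps_lt ((UU w k)⁻¹ : Equiv.Perm ℕ) N (UU_inv_fix hM k)

include hE

lemma rank_eq_card {i j : ℕ} (hij : i ≤ j) (hj : j ≤ n) :
    rank e w i j = (Rset N e w i j).card := by
  have himg : (⇑(UU w i)) '' {p : ℕ | p < e i ∧ ∀ k, i < k → k ≤ j → chain w i k p < e k}
      = ↑(Rset N e w i j) := by
    ext q
    constructor
    · rintro ⟨p, ⟨hp1, hp2⟩, rfl⟩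
      refine Finset.mem_coe.mpr (mem_Rset.mpr ⟨UU_lt hM i p (by
        have := hE i (le_trans hij hj); omega), ?_⟩)
      intro k hik hkj
      rcases Nat.eq_or_lt_of_le hik with rfl | hik'
      · simpa using hp1
      · rw [← chain_eq_UU w (le_of_lt hik') p]
        exact hp2 k hik' hkj
    · intro hq
      obtain ⟨hqN, hq2⟩ := mem_Rset.mp (Finset.mem_coe.mp hq)
      refine ⟨(UU w i)⁻¹ q, ⟨?_, ?_⟩, (UU w i).apply_inv_self q⟩
      · exact hq2 i le_rfl hij
      · intro k hik hkj
        rw [chain_eq_UU w (le_of_lt hik), (UU w i).apply_inv_self]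
        exact hq2 k (le_of_lt hik) hkj
  have h2 : rank e w i j
      = ((⇑(UU w i)) '' {p : ℕ | p < e i ∧ ∀ k, i < k → k ≤ j → chain w i k p < e k}).ncard :=
    (Set.ncard_image_of_injective _ (UU w i).injective).symm
  rw [h2, himg, Set.ncard_coe_finset]

omit hE

omit hM in
lemma Rset_mono_right {i j : ℕ} : Rset N e w i j ⊆ Rset N e w i (j - 1) := by
  intro q hq
  obtain ⟨h1, h2⟩ := mem_Rset.mp hq
  exact mem_Rset.mpr ⟨h1, fun k hk1 hk2 => h2 k hk1 (by omega)⟩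

omit hM in
lemma Rset_mono_up {i j : ℕ} : Rset N e w i j ⊆ Rset N e w (i + 1) j := by
  intro q hq
  obtain ⟨h1, h2⟩ := mem_Rset.mp hq
  exact mem_Rset.mpr ⟨h1, fun k hk1 hk2 => h2 k (by omega) hk2⟩

omit hM

lemma mem_Af {i j p : ℕ} (hij : i < j) :
    p ∈ Af N e w i j ↔ p < N ∧ (∀ k, i ≤ k → k ≤ j - 1 → (UU w k)⁻¹ p < e k) ∧
      e j ≤ (UU w j)⁻¹ p := by
  constructor
  · intro hp
    obtain ⟨hp1, hp2⟩ := Finset.mem_sdiff.mp hp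
    obtain ⟨hpN, hc⟩ := mem_Rset.mp hp1
    refine ⟨hpN, hc, ?_⟩
    by_contra hcon
    exact hp2 (mem_Rset.mpr ⟨hpN, fun k hk1 hk2 => by
      rcases Nat.lt_or_ge k j with hkj | hkj
      · exact hc k hk1 (by omega)
      · obtain rfl : k = j := by omega
        omega⟩)
  · rintro ⟨h1, h2, h3⟩
    refine Finset.mem_sdiff.mpr ⟨mem_Rset.mpr ⟨h1, h2⟩, fun hmem => ?_⟩
    have := (mem_Rset.mp hmem).2 j hij.le le_rfl
    omega

lemma mem_Bf {i j q : ℕ} (hij : i < j) :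
    q ∈ Bf N e w i j ↔ q < N ∧ (∀ k, i + 1 ≤ k → k ≤ j → (UU w k)⁻¹ q < e k) ∧
      e i ≤ (UU w i)⁻¹ q := by
  constructor
  · intro hq
    obtain ⟨hq1, hq2⟩ := Finset.mem_sdiff.mp hq
    obtain ⟨hqN, hc⟩ := mem_Rset.mp hq1
    refine ⟨hqN, hc, ?_⟩
    by_contra hcon
    exact hq2 (mem_Rset.mpr ⟨hqN, fun k hk1 hk2 => by
      rcases Nat.lt_or_ge i k with hik | hik
      · exact hc k (by omega) hk2
      · obtain rfl : k = i := by omega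
        omega⟩)
  · rintro ⟨h1, h2, h3⟩
    refine Finset.mem_sdiff.mpr ⟨mem_Rset.mpr ⟨h1, h2⟩, fun hmem => ?_⟩
    have := (mem_Rset.mp hmem).2 i le_rfl hij.le
    omega

lemma mem_QF {x : (ℕ × ℕ) × ℕ × ℕ} :
    x ∈ QF N n e w ↔ x.1.1 ≤ n ∧ x.1.2 ≤ n ∧ x.2.1 < N ∧ x.2.2 < N ∧
      x.1.1 < x.1.2 ∧ x.2.1 ∈ Af N e w x.1.1 x.1.2 ∧ x.2.2 ∈ Bf N e w x.1.1 x.1.2 := by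
  simp only [QF, Finset.mem_filter, Finset.mem_product, Finset.mem_range]
  constructor
  · rintro ⟨⟨⟨h1, h2⟩, h3, h4⟩, h5, h6, h7⟩
    exact ⟨by omega, by omega, h3, h4, h5, h6, h7⟩
  · rintro ⟨h1, h2, h3, h4, h5, h6, h7⟩
    exact ⟨⟨⟨by omega, by omega⟩, h3, h4⟩, h5, h6, h7⟩


omit hE in
lemma Af_lt {i j p : ℕ} (hp : p ∈ Af N e w i j) : p < N :=
  (mem_Rset.mp (Finset.mem_sdiff.mp hp).1).1

omit hE in
lemma Bf_lt {i j q : ℕ} (hq : q ∈ Bf N e w i j) : q < N :=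
  (mem_Rset.mp (Finset.mem_sdiff.mp hq).1).1

include hM in
omit hE in
lemma ell_eq_Xf (k : ℕ) (hk : 1 ≤ k) : ell (w k) = (Xf N w k).card := by
  obtain ⟨m, rfl⟩ : ∃ m, k = m + 1 := ⟨k - 1, by omega⟩
  set IF : Finset (ℕ × ℕ) := (Finset.range N ×ˢ Finset.range N).filter
    (fun p => p.1 < p.2 ∧ w (m + 1) p.2 < w (m + 1) p.1) with hIF
  have hset : InvS (w (m + 1)) = ↑IF := by
    ext p
    rw [Finset.mem_coe, hIF, Finset.mem_filter, Finset.mem_product, Finset.mem_range,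
      Finset.mem_range]
    constructor
    · intro hp
      have hb := invS_bdd (w (m + 1)) N (hM (m + 1)) p hp
      exact ⟨⟨hb.1, hb.2⟩, hp.1, hp.2⟩
    · rintro ⟨-, h1, h2⟩
      exact ⟨h1, h2⟩
  have h1 : ell (w (m + 1)) = IF.card := by
    rw [ell_eq, hset, Set.ncard_coe_finset]
  rw [h1]
  apply Finset.card_bij (fun a _ => (UU w (m + 1) a.1, UU w (m + 1) a.2))
  · intro a ha
    rw [hIF, Finset.mem_filter, Finset.mem_product, Finset.mem_range, Finset.mem_range] at ha
    obtain ⟨⟨ha1, ha2⟩, ha3, ha4⟩ := ha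
    rw [Xf, Finset.mem_filter, Finset.mem_product, Finset.mem_range, Finset.mem_range]
    refine ⟨⟨UU_lt hM _ _ ha1, UU_lt hM _ _ ha2⟩, ?_, ?_⟩
    · simpa using ha3
    · simp only [Nat.add_sub_cancel, UU_succ_apply]
      exact ha4
  · intro a ha b hb hab
    simp only [Prod.mk.injEq] at hab
    exact Prod.ext ((UU w (m + 1)).injective hab.1) ((UU w (m + 1)).injective hab.2)
  · intro b hb
    rw [Xf, Finset.mem_filter, Finset.mem_product, Finset.mem_range, Finset.mem_range] at hb
    obtain ⟨⟨hb1, hb2⟩, hb3, hb4⟩ := hb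
    refine ⟨((UU w (m + 1))⁻¹ b.1, (UU w (m + 1))⁻¹ b.2), ?_, ?_⟩
    · rw [hIF, Finset.mem_filter, Finset.mem_product, Finset.mem_range, Finset.mem_range]
      refine ⟨⟨UU_inv_lt hM _ _ hb1, UU_inv_lt hM _ _ hb2⟩, hb3, ?_⟩
      have e1 : w (m + 1) ((UU w (m + 1))⁻¹ b.1) = (UU w m)⁻¹ b.1 := by
        rw [← UU_succ_apply w m ((UU w (m + 1))⁻¹ b.1), (UU w (m + 1)).apply_inv_self]
      have e2 : w (m + 1) ((UU w (m + 1))⁻¹ b.2) = (UU w m)⁻¹ b.2 := by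
        rw [← UU_succ_apply w m ((UU w (m + 1))⁻¹ b.2), (UU w (m + 1)).apply_inv_self]
      rw [e1, e2]
      simpa using hb4
    · simp [(UU w (m + 1)).apply_inv_self]

include hM hE in
lemma codim_eq : codim n (rank e w) = (QF N n e w).card := by
  have hfib : ∀ x ∈ QF N n e w, x.1 ∈ Finset.range (n + 1) ×ˢ Finset.range (n + 1) := by
    intro x hx
    have h := mem_QF.mp hx
    exact Finset.mem_product.mpr ⟨Finset.mem_range.mpr (by omega), Finset.mem_range.mpr (by omega)⟩
  rw [Finset.card_eq_sum_card_fiberwise hfib, codim, ← Finset.sum_product']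
  apply Finset.sum_congr rfl
  rintro ⟨i, j⟩ hij
  rw [Finset.mem_product, Finset.mem_range, Finset.mem_range] at hij
  by_cases h : i < j
  · rw [if_pos h]
    have hA : (Af N e w i j).card = rank e w i (j - 1) - rank e w i j := by
      rw [rank_eq_card hM hE (by omega) (by omega), rank_eq_card hM hE (by omega) (by omega),
        Af, Finset.card_sdiff_of_subset Rset_mono_right]
    have hB : (Bf N e w i j).card = rank e w (i + 1) j - rank e w i j := by
      rw [rank_eq_card hM hE (by omega) (by omega), rank_eq_card hM hE (by omega) (by omega),
        Bf, Finset.card_sdiff_of_subset Rset_mono_up]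
    rw [← hA, ← hB, ← Finset.card_product]
    apply Finset.card_bij (fun pq _ => (((i, j) : ℕ × ℕ), pq))
    · intro a ha
      rw [Finset.mem_product] at ha
      refine Finset.mem_filter.mpr ⟨mem_QF.mpr ⟨by show i ≤ n; omega, by show j ≤ n; omega,
        Af_lt ha.1, Bf_lt ha.2, h, ha.1, ha.2⟩, rfl⟩
    · intro a _ b _ hab
      simpa using hab
    · intro x hx
      rw [Finset.mem_filter] at hx
      obtain ⟨hx1, hx2⟩ := hx
      have h2 := mem_QF.mp hx1
      refine ⟨x.2, ?_, ?_⟩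
      · rw [Finset.mem_product, ← show x.1.1 = i from congrArg Prod.fst hx2,
          ← show x.1.2 = j from congrArg Prod.snd hx2]
        exact ⟨h2.2.2.2.2.2.1, h2.2.2.2.2.2.2⟩
      · exact Prod.ext hx2.symm rfl
  · rw [if_neg h]
    symm
    rw [Finset.card_eq_zero, Finset.filter_eq_empty_iff]
    intro x hx hx2
    have h2 := mem_QF.mp hx
    rw [hx2] at h2
    exact h h2.2.2.2.2.1

include hM in
omit hE in
lemma diag_eq : diagLength n w = (TF N n w).card := by
  have hfib : ∀ x ∈ TF N n w, x.1 ∈ Finset.Icc 1 n := by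
    intro x hx
    exact (Finset.mem_product.mp (Finset.mem_filter.mp hx).1).1
  rw [Finset.card_eq_sum_card_fiberwise hfib, diagLength]
  apply Finset.sum_congr rfl
  intro k hk
  rw [ell_eq_Xf hM k (Finset.mem_Icc.mp hk).1]
  apply Finset.card_bij (fun b _ => ((k, b) : ℕ × ℕ × ℕ))
  · intro b hb
    refine Finset.mem_filter.mpr ⟨Finset.mem_filter.mpr ⟨?_, ?_⟩, rfl⟩
    · exact Finset.mem_product.mpr ⟨hk, (Finset.mem_filter.mp hb).1⟩
    · exact hb
  · intro a _ b _ hab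
    simpa using hab
  · rintro ⟨x1, x2⟩ hx
    rw [Finset.mem_filter] at hx
    obtain ⟨hx1, hx2⟩ := hx
    dsimp at hx2
    subst hx2
    exact ⟨x2, (Finset.mem_filter.mp hx1).2, rfl⟩

omit hM hE in
lemma kk_def (x : (ℕ × ℕ) × ℕ × ℕ) :
    kk w x = sInf {m | x.1.1 < m ∧ (UU w m)⁻¹ x.2.2 < (UU w m)⁻¹ x.2.1} := rfl

omit hM hE in
lemma kk_spec {x : (ℕ × ℕ) × ℕ × ℕ} (hx : x ∈ QF N n e w) :
    x.1.1 < kk w x ∧ kk w x ≤ x.1.2 ∧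
    (UU w (kk w x))⁻¹ x.2.2 < (UU w (kk w x))⁻¹ x.2.1 ∧
    (UU w (kk w x - 1))⁻¹ x.2.1 < (UU w (kk w x - 1))⁻¹ x.2.2 := by
  obtain ⟨⟨i, j⟩, p, q⟩ := x
  obtain ⟨hin, hjn, hpN, hqN, hij, hpA, hqB⟩ := mem_QF.mp hx
  dsimp only at hin hjn hpN hqN hij hpA hqB ⊢
  obtain ⟨-, hA2, hA3⟩ := (mem_Af hij).mp hpA
  obtain ⟨-, hB2, hB3⟩ := (mem_Bf hij).mp hqB
  set S : Set ℕ := {m | i < m ∧ (UU w m)⁻¹ q < (UU w m)⁻¹ p} with hS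
  have hkk : kk w (((i, j), p, q) : (ℕ × ℕ) × ℕ × ℕ) = sInf S := rfl
  have hjS : j ∈ S := by
    refine ⟨hij, ?_⟩
    have h1 := hB2 j (by omega) le_rfl
    omega
  have hmem := Nat.sInf_mem (⟨j, hjS⟩ : S.Nonempty)
  have hle : sInf S ≤ j := Nat.sInf_le hjS
  obtain ⟨hk1, hk2⟩ := hmem
  rw [hkk]
  refine ⟨hk1, hle, hk2, ?_⟩
  rcases Nat.eq_or_lt_of_le (show i ≤ sInf S - 1 by omega) with heq | hlt
  · rw [← heq]
    have h1 : (UU w i)⁻¹ p < e i := hA2 i le_rfl (by omega)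
    omega
  · have hnot : sInf S - 1 ∉ S := Nat.notMem_of_lt_sInf (by omega)
    have hle2 : (UU w (sInf S - 1))⁻¹ p ≤ (UU w (sInf S - 1))⁻¹ q := by
      by_contra hc
      exact hnot ⟨hlt, by omega⟩
    have hne : (UU w (sInf S - 1))⁻¹ p ≠ (UU w (sInf S - 1))⁻¹ q := by
      intro hc
      have hpq : p = q := ((UU w (sInf S - 1))⁻¹ : Equiv.Perm ℕ).injective hc
      rw [hpq] at hk2
      exact lt_irrefl _ hk2
    omega

omit hM hE in
lemma FF_mem {x : (ℕ × ℕ) × ℕ × ℕ} (hx : x ∈ QF N n e w) : FF w x ∈ TF N n w := by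
  obtain ⟨hk1, hk2, hk3, hk4⟩ := kk_spec hx
  obtain ⟨hin, hjn, hpN, hqN, hij, hpA, hqB⟩ := mem_QF.mp hx
  refine Finset.mem_filter.mpr ⟨Finset.mem_product.mpr ⟨?_, ?_⟩, ?_⟩
  · show kk w x ∈ Finset.Icc 1 n
    exact Finset.mem_Icc.mpr ⟨by omega, by omega⟩
  · show (x.2.2, x.2.1) ∈ Finset.range N ×ˢ Finset.range N
    exact Finset.mem_product.mpr ⟨Finset.mem_range.mpr hqN, Finset.mem_range.mpr hpN⟩
  · show (x.2.2, x.2.1) ∈ Xf N w (kk w x)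
    rw [Xf, Finset.mem_filter]
    exact ⟨Finset.mem_product.mpr ⟨Finset.mem_range.mpr hqN, Finset.mem_range.mpr hpN⟩, hk3, hk4⟩

omit hM hE in
lemma QF_sep {x y : (ℕ × ℕ) × ℕ × ℕ} (hx : x ∈ QF N n e w) (hy : y ∈ QF N n e w)
    (h2 : x.2 = y.2) (hlt : x.1.1 < y.1.1) : x.1.2 < y.1.1 := by
  obtain ⟨hin, hjn, hpN, hqN, hij, hpA, hqB⟩ := mem_QF.mp hx
  obtain ⟨hin', hjn', hpN', hqN', hij', hpA', hqB'⟩ := mem_QF.mp hy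
  rw [← h2] at hqB'
  obtain ⟨-, hB2, -⟩ := (mem_Bf hij).mp hqB
  obtain ⟨-, -, hB3'⟩ := (mem_Bf hij').mp hqB'
  by_contra hc
  have h3 := hB2 y.1.1 (by omega) (by omega)
  omega

omit hM hE in
lemma FF_inj : Set.InjOn (FF w) ↑(QF N n e w) := by
  intro x hx y hy hxy
  rw [Finset.mem_coe] at hx hy
  have hkkeq : kk w x = kk w y := congrArg Prod.fst hxy
  have hq : x.2.2 = y.2.2 := congrArg (fun z => z.2.1) hxy
  have hp : x.2.1 = y.2.1 := congrArg (fun z => z.2.2) hxy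
  have h2 : x.2 = y.2 := Prod.ext hp hq
  obtain ⟨hk1, hk2, -, -⟩ := kk_spec hx
  obtain ⟨hk1', hk2', -, -⟩ := kk_spec hy
  rw [hkkeq] at hk1 hk2
  have hi : x.1.1 = y.1.1 := by
    rcases lt_trichotomy x.1.1 y.1.1 with h | h | h
    · have := QF_sep hx hy h2 h; omega
    · exact h
    · have := QF_sep hy hx h2.symm h; omega
  have hj : x.1.2 = y.1.2 := by
    obtain ⟨hin, hjn, hpN, hqN, hij, hpA, hqB⟩ := mem_QF.mp hx
    obtain ⟨hin', hjn', hpN', hqN', hij', hpA', hqB'⟩ := mem_QF.mp hy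
    rw [← hp, ← hi] at hpA'
    obtain ⟨-, hA2, hA3⟩ := (mem_Af hij).mp hpA
    obtain ⟨-, hA2', hA3'⟩ := (mem_Af (show x.1.1 < y.1.2 by omega)).mp hpA'
    rcases lt_trichotomy x.1.2 y.1.2 with h | h | h
    · have h3 := hA2' x.1.2 (by omega) (by omega)
      omega
    · exact h
    · have h3 := hA2 y.1.2 (by omega) (by omega)
      omega
  have h1 : x.1 = y.1 := Prod.ext hi hj
  exact Prod.ext h1 h2

include hM hE in
lemma main_lt (t0 : ℕ × ℕ × ℕ) (ht0 : t0 ∈ TF N n w)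
    (hmiss : ∀ x ∈ QF N n e w, FF w x ≠ t0) :
    codim n (rank e w) < diagLength n w := by
  rw [codim_eq hM hE, diag_eq hM]
  have h1 : (QF N n e w).card ≤ ((TF N n w).erase t0).card :=
    Finset.card_le_card_of_injOn (FF w)
      (fun a ha => Finset.mem_erase.mpr ⟨hmiss a ha, FF_mem ha⟩)
      (FF_inj.mono le_rfl)
  have h2 := Finset.card_erase_of_mem ht0
  have h3 : 0 < (TF N n w).card := Finset.card_pos.mpr ⟨t0, ht0⟩
  omega

end Main
end QAux

/-- for a minimal lace diagram, `ℓ(s k * w 1) > ℓ(w 1)` for all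
`1 ≤ k < e 0` (0-indexed: `k + 1 < e 0`), and `ℓ(w n * s k) > ℓ(w n)` for all
`1 ≤ k < e n`; equivalently `(w 1)⁻¹` has no descents before `e 0` and `w n` has
no descents before `e n`. -/
theorem minimal_first_last (n : ℕ) (hn : 1 ≤ n) (e : ℕ → ℕ)
    (w : ℕ → Equiv.Perm ℕ) (hw : IsMinimal n e w) :
    (∀ k, k + 1 < e 0 →
      ell (w 1) < ell (Equiv.swap k (k + 1) * w 1) ∧ (w 1)⁻¹ k < (w 1)⁻¹ (k + 1)) ∧
    (∀ k, k + 1 < e n →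
      ell (w n) < ell (w n * Equiv.swap k (k + 1)) ∧ w n k < w n (k + 1)) := by
  obtain ⟨⟨hl1, hl2⟩, hlen⟩ := hw
  have hfin : (⋃ k ∈ Finset.Icc 1 n, {x | w k x ≠ x}).Finite :=
    Set.Finite.biUnion (Finset.Icc 1 n).finite_toSet
      (fun k hk => (hl2 k (Finset.mem_Icc.mp hk).1 (Finset.mem_Icc.mp hk).2).1)
  obtain ⟨b, hb⟩ := hfin.bddAbove
  set N : ℕ := max (b + 1) (Finset.sup (Finset.range (n + 1)) e) with hN
  have hM : ∀ k x, N ≤ x → w k x = x := by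
    intro k x hx
    rcases Decidable.em (1 ≤ k ∧ k ≤ n) with hk | hk
    · by_contra hc
      have hmem : x ∈ ⋃ k ∈ Finset.Icc 1 n, {x | w k x ≠ x} :=
        Set.mem_biUnion (Finset.mem_coe.mpr (Finset.mem_Icc.mpr ⟨hk.1, hk.2⟩)) hc
      have h1 := hb hmem
      have h2 : b + 1 ≤ N := le_max_left _ _
      omega
    · have h1 : w k = 1 := hl1 k (by omega)
      rw [h1]; rfl
  have hE : ∀ k, k ≤ n → e k ≤ N := by
    intro k hk
    calc e k ≤ Finset.sup (Finset.range (n + 1)) e :=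
          Finset.le_sup (Finset.mem_range.mpr (by omega))
    _ ≤ N := le_max_right _ _
  constructor
  · intro k hk
    have hfs1 : FinSupp (w 1) := (hl2 1 le_rfl hn).1
    have hd : (w 1)⁻¹ k < (w 1)⁻¹ (k + 1) := by
      by_contra hc
      have hne : (w 1)⁻¹ (k + 1) ≠ (w 1)⁻¹ k := by
        intro h
        have h2 := ((w 1)⁻¹ : Equiv.Perm ℕ).injective h
        omega
      have hdesc : (w 1)⁻¹ (k + 1) < (w 1)⁻¹ k := by omega
      have hE0 : e 0 ≤ N := hE 0 (by omega)
      have ht0 : ((1, k + 1, k) : ℕ × ℕ × ℕ) ∈ QAux.TF N n w := by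
        refine Finset.mem_filter.mpr ⟨Finset.mem_product.mpr
          ⟨Finset.mem_Icc.mpr ⟨le_rfl, hn⟩, ?_⟩, ?_⟩
        · show ((k + 1, k) : ℕ × ℕ) ∈ Finset.range N ×ˢ Finset.range N
          exact Finset.mem_product.mpr ⟨Finset.mem_range.mpr (by omega),
            Finset.mem_range.mpr (by omega)⟩
        · show ((k + 1, k) : ℕ × ℕ) ∈ QAux.Xf N w 1
          rw [QAux.Xf, Finset.mem_filter]
          refine ⟨Finset.mem_product.mpr ⟨Finset.mem_range.mpr (by omega),
            Finset.mem_range.mpr (by omega)⟩, ?_, ?_⟩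
          · show (QAux.UU w 1)⁻¹ (k + 1) < (QAux.UU w 1)⁻¹ k
            rw [QAux.UU_one]
            exact hdesc
          · show (QAux.UU w 0)⁻¹ k < (QAux.UU w 0)⁻¹ (k + 1)
            rw [QAux.UU_zero]
            simp
      have hmiss : ∀ x ∈ QAux.QF N n e w, QAux.FF w x ≠ (1, k + 1, k) := by
        intro x hx heq
        obtain ⟨hk1, hk2, -, -⟩ := QAux.kk_spec hx
        have hkx : QAux.kk w x = 1 := congrArg Prod.fst heq
        have hq : x.2.2 = k + 1 := congrArg (fun z : ℕ × ℕ × ℕ => z.2.1) heq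
        have hi : x.1.1 = 0 := by omega
        obtain ⟨-, -, -, -, hij, -, hqB⟩ := QAux.mem_QF.mp hx
        obtain ⟨-, -, hB3⟩ := (QAux.mem_Bf hij).mp hqB
        rw [hi, QAux.UU_zero] at hB3
        simp only [inv_one, Equiv.Perm.one_apply] at hB3
        omega
      have hcontra := QAux.main_lt hM hE _ ht0 hmiss
      omega
    refine ⟨?_, hd⟩
    have h3 := QAux.ell_swap_mul (w 1) hfs1 k hd
    omega
  · intro k hk
    have hfsn : FinSupp (w n) := (hl2 n hn le_rfl).1
    have hEn : e n ≤ N := hE n le_rfl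
    have hd : w n k < w n (k + 1) := by
      by_contra hc
      have hne : w n (k + 1) ≠ w n k := by
        intro h
        have h2 := (w n).injective h
        omega
      have hdesc : w n (k + 1) < w n k := by omega
      obtain ⟨m, rfl⟩ : ∃ m, n = m + 1 := ⟨n - 1, by omega⟩
      have ht0 : ((m + 1, QAux.UU w (m + 1) k, QAux.UU w (m + 1) (k + 1)) : ℕ × ℕ × ℕ)
          ∈ QAux.TF N (m + 1) w := by
        refine Finset.mem_filter.mpr ⟨Finset.mem_product.mpr
          ⟨Finset.mem_Icc.mpr ⟨by omega, le_rfl⟩, ?_⟩, ?_⟩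
        · show ((QAux.UU w (m + 1) k, QAux.UU w (m + 1) (k + 1)) : ℕ × ℕ)
            ∈ Finset.range N ×ˢ Finset.range N
          exact Finset.mem_product.mpr
            ⟨Finset.mem_range.mpr (QAux.UU_lt hM _ _ (by omega)),
             Finset.mem_range.mpr (QAux.UU_lt hM _ _ (by omega))⟩
        · show ((QAux.UU w (m + 1) k, QAux.UU w (m + 1) (k + 1)) : ℕ × ℕ)
            ∈ QAux.Xf N w (m + 1)
          rw [QAux.Xf, Finset.mem_filter]
          refine ⟨Finset.mem_product.mpr
            ⟨Finset.mem_range.mpr (QAux.UU_lt hM _ _ (by omega)),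
             Finset.mem_range.mpr (QAux.UU_lt hM _ _ (by omega))⟩, ?_, ?_⟩
          · show (QAux.UU w (m + 1))⁻¹ (QAux.UU w (m + 1) k)
              < (QAux.UU w (m + 1))⁻¹ (QAux.UU w (m + 1) (k + 1))
            simp only [Equiv.Perm.inv_apply_self]
            omega
          · show (QAux.UU w (m + 1 - 1))⁻¹ (QAux.UU w (m + 1) (k + 1))
              < (QAux.UU w (m + 1 - 1))⁻¹ (QAux.UU w (m + 1) k)
            simp only [Nat.add_sub_cancel, QAux.UU_succ_apply]
            exact hdesc
      have hmiss : ∀ x ∈ QAux.QF N (m + 1) e w, QAux.FF w x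
          ≠ (m + 1, QAux.UU w (m + 1) k, QAux.UU w (m + 1) (k + 1)) := by
        intro x hx heq
        obtain ⟨hk1, hk2, -, -⟩ := QAux.kk_spec hx
        have hkx : QAux.kk w x = m + 1 := congrArg Prod.fst heq
        have hp : x.2.1 = QAux.UU w (m + 1) (k + 1) := congrArg (fun z : ℕ × ℕ × ℕ => z.2.2) heq
        obtain ⟨-, hjn, -, -, hij, hpA, -⟩ := QAux.mem_QF.mp hx
        have hj : x.1.2 = m + 1 := by omega
        obtain ⟨-, -, hA3⟩ := (QAux.mem_Af hij).mp hpA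
        rw [hj, hp] at hA3
        rw [Equiv.Perm.inv_apply_self] at hA3
        omega
      have hcontra := QAux.main_lt hM hE _ ht0 hmiss
      omega
    refine ⟨?_, hd⟩
    have h3 := QAux.ell_mul_swap (w n) hfsn k hd
    omega
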